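/- Let β > 0, c ≥ 0, T > 0 with βT < 1, and set α = 1 − βT. Let (s[k]) be a sequence in ℝ^m satisfying s[k+1] = α s[k] + e[k] for all k ≥ 0 with ‖e[k]‖ ≤ c T² for all k. Then lim sup_{k→∞} ‖s[k]‖ ≤ (c/β) T; i.e., the quasi-sliding motion has an O(T) boundary layer. -/
import Mathlib


open Filter

/-- Let `β > 0`, `c ≥ 0`, `T > 0` with `βT < 1`, and `α = 1 − βT`.
If `s[k+1] = α s[k] + e[k]` with `‖e[k]‖ ≤ c T²`, then
`limsup_{k→∞} ‖s[k]‖ ≤ (c/β) T`, i.e. the quasi-sliding motion has an `O(T)`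
boundary layer. -/
theorem quasi_sliding_OT_boundary_layer
    {m : ℕ} (β c T : ℝ) (hβ : 0 < β) (hc : 0 ≤ c) (hT : 0 < T) (hβT : β * T < 1)
    (s e : ℕ → EuclideanSpace ℝ (Fin m))
    (hrec : ∀ k : ℕ, s (k + 1) = (1 - β * T) • s k + e k)
    (hE : ∀ k : ℕ, ‖e k‖ ≤ c * T ^ 2) :
    limsup (fun k : ℕ => ‖s k‖) atTop ≤ (c / β) * T := by
  set α : ℝ := 1 - β * T with hα
  have hα0 : 0 ≤ α := by
    have : 0 < β * T := mul_pos hβ hT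
    linarith
  have hα1 : α < 1 := by
    have : 0 < β * T := mul_pos hβ hT
    linarith
  have hM : 0 ≤ (c / β) * T := by positivity
  have key : ∀ k, ‖s k‖ ≤ α ^ k * ‖s 0‖ + (c / β) * T := by
    intro k
    induction k with
    | zero => simpa using hM
    | succ k ih =>
      have h1 : ‖s (k + 1)‖ ≤ α * ‖s k‖ + c * T ^ 2 := by
        rw [hrec k]
        calc ‖α • s k + e k‖ ≤ ‖α • s k‖ + ‖e k‖ := norm_add_le _ _
          _ ≤ α * ‖s k‖ + c * T ^ 2 := by
              rw [norm_smul, Real.norm_eq_abs, abs_of_nonneg hα0]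
              exact add_le_add le_rfl (hE k)
      have h2 : α * ‖s k‖ ≤ α * (α ^ k * ‖s 0‖ + (c / β) * T) :=
        mul_le_mul_of_nonneg_left ih hα0
      have h3 : α * ((c / β) * T) + c * T ^ 2 = (c / β) * T := by
        field_simp [hα]
        ring
      calc ‖s (k + 1)‖ ≤ α * ‖s k‖ + c * T ^ 2 := h1
        _ ≤ α * (α ^ k * ‖s 0‖ + (c / β) * T) + c * T ^ 2 := by linarith [h2]
        _ = α ^ (k + 1) * ‖s 0‖ + (α * ((c / β) * T) + c * T ^ 2) := by ring
        _ = α ^ (k + 1) * ‖s 0‖ + (c / β) * T := by rw [h3]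
  have htend : Tendsto (fun k : ℕ => α ^ k * ‖s 0‖ + (c / β) * T) atTop
      (nhds ((c / β) * T)) := by
    have h0 : Tendsto (fun k : ℕ => α ^ k) atTop (nhds 0) :=
      tendsto_pow_atTop_nhds_zero_of_lt_one hα0 hα1
    have := (h0.mul_const ‖s 0‖).add_const ((c / β) * T)
    simpa using this
  have hle : limsup (fun k : ℕ => ‖s k‖) atTop ≤
      limsup (fun k : ℕ => α ^ k * ‖s 0‖ + (c / β) * T) atTop := by
    refine limsup_le_limsup (Eventually.of_forall key) ?_ ?_
    · exact isCoboundedUnder_le_of_le atTop fun k => norm_nonneg (s k)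
    · exact htend.isBoundedUnder_le
  rw [htend.limsup_eq] at hle
  exact hle
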